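/- Let n ≥ 1, let G be a simple graph on Fin n with Laplacian matrix L (over ℝ) and degree vector d, and let D be a real n×n matrix with zero diagonal. Then the identity L·D + 2·I = (2·1 − d)·1ᵀ holds if and only if G is a tree and D is its distance matrix (D i j = dist_G(i, j) for all i, j). Thus the bilinear matrix equation characterizes trees in terms of their Laplacian and distance matrices. -/

import Mathlib

open Matrix Finset BigOperators SimpleGraph

namespace BilinearTreeAux

variable {V : Type*} {G : SimpleGraph V}

lemma exists_pred {v r : V} (h : G.Reachable v r) (hne : v ≠ r) :
    ∃ u, G.Adj v u ∧ G.dist u r + 1 = G.dist v r := by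
  obtain ⟨p, hp⟩ := h.exists_walk_length_eq_dist
  have hpos : 0 < G.dist v r := h.pos_dist_of_ne hne
  cases p with
  | nil => exact absurd rfl hne
  | @cons _ u _ ha q =>
    refine ⟨u, ha, ?_⟩
    have h1 : G.dist u r ≤ q.length := dist_le q
    have h2 : G.dist v r ≤ G.dist u r + 1 := by
      obtain ⟨q', hq'⟩ := (Walk.reachable q).exists_walk_length_eq_dist
      have := dist_le (SimpleGraph.Walk.cons ha q')
      simpa [hq'] using this
    have h3 : q.length + 1 = G.dist v r := by simpa using hp
    omega

lemma card_le_of_connected [Fintype V] [DecidableEq V] [Fintype G.edgeSet]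
    (hc : G.Connected) : Fintype.card V ≤ G.edgeFinset.card + 1 := by
  classical
  obtain ⟨r⟩ := hc.nonempty
  have hex : ∀ v : V, v ≠ r → ∃ u, G.Adj v u ∧ G.dist u r + 1 = G.dist v r :=
    fun v hv => exists_pred (hc.preconnected v r) hv
  choose! f hf1 hf2 using hex
  have hmaps : ∀ v ∈ Finset.univ.erase r, s(v, f v) ∈ G.edgeFinset := by
    intro v hv
    rw [mem_edgeFinset, mem_edgeSet]
    exact hf1 v (Finset.mem_erase.mp hv).1
  have hinj : Set.InjOn (fun v => s(v, f v)) (Finset.univ.erase r : Finset V) := by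
    intro a ha b hb hab
    have ha' : a ≠ r := (Finset.mem_erase.mp (Finset.mem_coe.mp ha)).1
    have hb' : b ≠ r := (Finset.mem_erase.mp (Finset.mem_coe.mp hb)).1
    have h2a := hf2 a ha'
    have h2b := hf2 b hb'
    rcases Sym2.eq_iff.mp hab with ⟨h1, h2⟩ | ⟨h1, h2⟩
    · exact h1
    · exfalso
      rw [h2] at h2a
      rw [← h1] at h2b
      omega
  have hcard := Finset.card_le_card_of_injOn _ hmaps hinj
  have hrmem : r ∈ (Finset.univ : Finset V) := Finset.mem_univ r
  rw [Finset.card_erase_of_mem hrmem, Finset.card_univ] at hcard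
  have : 0 < Fintype.card V := Fintype.card_pos_iff.mpr ⟨r⟩
  omega

lemma isTree_of_card [Fintype V] [DecidableEq V] [DecidableRel G.Adj] [Fintype G.edgeSet]
    (hc : G.Connected) (hcard : G.edgeFinset.card + 1 = Fintype.card V) : G.IsTree := by
  classical
  refine ⟨hc, ?_⟩
  rw [isAcyclic_iff_forall_adj_isBridge]
  intro v w hadj
  by_contra hbr
  rw [isBridge_iff] at hbr
  have hreach : (G \ SimpleGraph.fromEdgeSet {s(v, w)}).Reachable v w := by
    by_contra h; exact hbr h
  have hG'del : (G \ SimpleGraph.fromEdgeSet {s(v, w)}) = G.deleteEdges {s(v, w)} := rfl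
  have hconn' : (G.deleteEdges {s(v, w)}).Connected := by
    rw [connected_iff]
    refine ⟨?_, hc.nonempty⟩
    intro a b
    obtain ⟨p⟩ := hc.preconnected a b
    induction p with
    | nil => exact Reachable.refl _
    | @cons a c b h q ih =>
      refine Reachable.trans ?_ ih
      by_cases he : s(a, c) = s(v, w)
      · rcases Sym2.eq_iff.mp he with ⟨h1, h2⟩ | ⟨h1, h2⟩
        · subst h1; subst h2; rw [← hG'del]; exact hreach
        · subst h1; subst h2; rw [← hG'del]; exact hreach.symm
      · refine Adj.reachable ?_
        rw [deleteEdges_adj]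
        exact ⟨h, by simpa using he⟩
  haveI : DecidableRel (G.deleteEdges {s(v, w)}).Adj := fun a b =>
    decidable_of_iff (G.Adj a b ∧ ¬ s(a, b) = s(v, w)) (by simp [deleteEdges_adj])
  have hcard' := card_le_of_connected hconn'
  have hedges : (G.deleteEdges {s(v, w)}).edgeFinset = G.edgeFinset \ {s(v, w)} := by
    ext e'
    simp [edgeSet_deleteEdges]
  have hmem : s(v, w) ∈ G.edgeFinset := by rw [mem_edgeFinset, mem_edgeSet]; exact hadj
  have hcardd : (G.deleteEdges {s(v, w)}).edgeFinset.card = G.edgeFinset.card - 1 := by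
    rw [hedges, Finset.card_sdiff_of_subset (by simpa using hmem)]
    simp
  rw [hcardd] at hcard'
  have hpos : 1 ≤ G.edgeFinset.card := Finset.card_pos.mpr ⟨_, hmem⟩
  omega

lemma path_step (ht : G.IsTree) {i j k : V} (hij : i ≠ j) (hk : G.Adj i k)
    (hle : G.dist k j ≤ G.dist i j) :
    ∃ w : G.Walk i j, w.IsPath ∧ w.length = G.dist k j + 1 ∧ w.getVert 1 = k := by
  classical
  have hreach : G.Reachable k j := ht.isConnected.preconnected k j
  obtain ⟨q, hq⟩ := hreach.exists_walk_length_eq_dist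
  have hqpath : q.IsPath := q.isPath_of_length_eq_dist hq
  have hdistpos : 0 < G.dist i j := (ht.isConnected.preconnected i j).pos_dist_of_ne hij
  have hi : i ∉ q.support := by
    intro hmem
    have hsplit := q.take_spec hmem
    have hlen : (q.takeUntil i hmem).length + (q.dropUntil i hmem).length = q.length := by
      rw [← SimpleGraph.Walk.length_append, hsplit]
    have hki : G.dist k i = 1 := (dist_eq_one_iff_adj).mpr hk.symm
    have h1 : G.dist k i ≤ (q.takeUntil i hmem).length := dist_le _
    have h2 : G.dist i j ≤ (q.dropUntil i hmem).length := dist_le _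
    omega
  refine ⟨SimpleGraph.Walk.cons hk q, ?_, ?_, ?_⟩
  · rw [SimpleGraph.Walk.cons_isPath_iff]; exact ⟨hqpath, hi⟩
  · simp [hq]
  · simp [SimpleGraph.Walk.getVert_cons_succ, SimpleGraph.Walk.getVert_zero]

lemma step_eq (ht : G.IsTree) {i j k : V} (hij : i ≠ j) (hk : G.Adj i k)
    (hle : G.dist k j ≤ G.dist i j) : G.dist k j + 1 = G.dist i j := by
  obtain ⟨w, hw, hwl, _⟩ := path_step ht hij hk hle
  obtain ⟨p, hp⟩ := (ht.isConnected.preconnected i j).exists_walk_length_eq_dist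
  have hppath := p.isPath_of_length_eq_dist hp
  have h := ht.IsAcyclic.path_unique ⟨w, hw⟩ ⟨p, hppath⟩
  have hwp : w = p := congrArg Subtype.val h
  rw [← hp, ← hwp, hwl]

lemma step_unique (ht : G.IsTree) {i j k k' : V} (hij : i ≠ j) (hk : G.Adj i k)
    (hk' : G.Adj i k') (hle : G.dist k j ≤ G.dist i j) (hle' : G.dist k' j ≤ G.dist i j) :
    k = k' := by
  obtain ⟨w, hw, _, hwv⟩ := path_step ht hij hk hle
  obtain ⟨w', hw', _, hwv'⟩ := path_step ht hij hk' hle'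
  have h := ht.IsAcyclic.path_unique ⟨w, hw⟩ ⟨w', hw'⟩
  have hww : w = w' := congrArg Subtype.val h
  rw [← hwv, hww, hwv']

lemma neighbor_dists (ht : G.IsTree) {i j : V} (hij : i ≠ j) :
    ∃ k₀, G.Adj i k₀ ∧ G.dist k₀ j + 1 = G.dist i j ∧
      ∀ k, G.Adj i k → k ≠ k₀ → G.dist k j = G.dist i j + 1 := by
  obtain ⟨k₀, hadj, hd⟩ := exists_pred (ht.isConnected.preconnected i j) hij
  refine ⟨k₀, hadj, hd, fun k hk hkne => ?_⟩
  have htri := ht.isConnected.dist_triangle (u := k) (v := i) (w := j)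
  have h1 : G.dist k i = 1 := dist_eq_one_iff_adj.mpr hk.symm
  by_cases hle : G.dist k j ≤ G.dist i j
  · exact absurd (step_unique ht hij hk hadj hle (by omega)) hkne
  · omega

lemma sum_dist_neighbors [Fintype V] [DecidableEq V] [DecidableRel G.Adj]
    (ht : G.IsTree) {i j : V} (hij : i ≠ j) :
    ∑ k ∈ G.neighborFinset i, (G.dist k j : ℝ) =
      (G.degree i : ℝ) * (G.dist i j : ℝ) + (G.degree i : ℝ) - 2 := by
  obtain ⟨k₀, hadj, hd, hother⟩ := neighbor_dists ht hij
  have hk₀mem : k₀ ∈ G.neighborFinset i := by rwa [mem_neighborFinset]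
  rw [← Finset.add_sum_erase _ _ hk₀mem]
  have hrest : ∀ k ∈ (G.neighborFinset i).erase k₀,
      (G.dist k j : ℝ) = (G.dist i j : ℝ) + 1 := by
    intro k hkmem
    obtain ⟨hne, hmem⟩ := Finset.mem_erase.mp hkmem
    rw [hother k ((mem_neighborFinset _ _ _).mp hmem) hne]
    push_cast
    ring
  rw [Finset.sum_congr rfl hrest, Finset.sum_const, Finset.card_erase_of_mem hk₀mem]
  have hdegpos : 1 ≤ (G.neighborFinset i).card := Finset.card_pos.mpr ⟨k₀, hk₀mem⟩
  have hcast : (G.dist k₀ j : ℝ) = (G.dist i j : ℝ) - 1 := by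
    have h' : (G.dist k₀ j : ℝ) + 1 = (G.dist i j : ℝ) := by exact_mod_cast hd
    linarith
  have hdeg : (G.degree i : ℝ) = ((G.neighborFinset i).card : ℝ) := by
    rw [G.card_neighborFinset_eq_degree]
  rw [hcast, nsmul_eq_mul, hdeg]
  rw [Nat.cast_sub hdegpos]
  push_cast
  ring

lemma tree_entry [Fintype V] [DecidableEq V] [DecidableRel G.Adj] (ht : G.IsTree) (i j : V) :
    (G.degree i : ℝ) * (G.dist i j : ℝ) - ∑ k ∈ G.neighborFinset i, (G.dist k j : ℝ)
      + (if i = j then (2 : ℝ) else 0) = 2 - (G.degree i : ℝ) := by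
  by_cases hij : i = j
  · subst hij
    simp only [if_pos rfl, SimpleGraph.dist_self, Nat.cast_zero, mul_zero]
    have h1 : ∀ k ∈ G.neighborFinset i, (G.dist k i : ℝ) = 1 := by
      intro k hk
      rw [dist_eq_one_iff_adj.mpr ((mem_neighborFinset _ _ _).mp hk).symm]
      norm_num
    rw [Finset.sum_congr rfl h1, Finset.sum_const, nsmul_eq_mul, mul_one,
      G.card_neighborFinset_eq_degree]
    norm_num
    ring
  · rw [sum_dist_neighbors ht hij, if_neg hij]
    ring

lemma sum_neighbor_swap [Fintype V] [DecidableEq V] [DecidableRel G.Adj] (f : V → V → ℝ) :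
    ∑ i, ∑ k ∈ G.neighborFinset i, f i k = ∑ k, ∑ i ∈ G.neighborFinset k, f i k := by
  simp_rw [neighborFinset_eq_filter, Finset.sum_filter]
  rw [Finset.sum_comm]
  refine Finset.sum_congr rfl fun k _ => Finset.sum_congr rfl fun i _ => ?_
  exact if_congr (adj_comm G i k) rfl rfl

end BilinearTreeAux
/-- The bilinear matrix equation `L·D + 2·I = (2·1 − d)·1ᵀ` characterizes trees in terms
of their Laplacian and distance matrices. -/
theorem bilinear_identity_iff_tree_and_distance {n : ℕ} (hn : 1 ≤ n)
    (G : SimpleGraph (Fin n)) [DecidableRel G.Adj]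
    (L : Matrix (Fin n) (Fin n) ℝ) (hL : L = G.lapMatrix ℝ)
    (d : Fin n → ℝ) (hd : ∀ i, d i = (G.degree i : ℝ))
    (D : Matrix (Fin n) (Fin n) ℝ) (hDdiag : ∀ i, D i i = 0) :
    (L * D + (2 : ℝ) • (1 : Matrix (Fin n) (Fin n) ℝ) =
      Matrix.vecMulVec (fun i => 2 - d i) (fun _ => (1 : ℝ))) ↔
    (G.IsTree ∧ ∀ i j, D i j = (G.dist i j : ℝ)) := by
  classical
  have entry : ∀ (M : Matrix (Fin n) (Fin n) ℝ),
      (L * M + (2 : ℝ) • (1 : Matrix (Fin n) (Fin n) ℝ) =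
        Matrix.vecMulVec (fun i => 2 - d i) (fun _ => (1 : ℝ))) ↔
      (∀ i j, (G.degree i : ℝ) * M i j - ∑ k ∈ G.neighborFinset i, M k j
        + (if i = j then (2 : ℝ) else 0) = 2 - (G.degree i : ℝ)) := by
    intro M
    have hLHS : ∀ i j, (L * M + (2 : ℝ) • (1 : Matrix (Fin n) (Fin n) ℝ)) i j =
        (G.degree i : ℝ) * M i j - ∑ k ∈ G.neighborFinset i, M k j
          + (if i = j then (2 : ℝ) else 0) := by
      intro i j
      have h1 : (L * M) i j = (G.lapMatrix ℝ *ᵥ fun k => M k j) i := by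
        rw [hL]
        simp [Matrix.mul_apply, Matrix.mulVec, dotProduct]
      rw [Matrix.add_apply, h1, SimpleGraph.lapMatrix_mulVec_apply]
      by_cases hij : i = j
      · simp [hij, Matrix.smul_apply, Matrix.one_apply]
      · simp [hij, Matrix.smul_apply, Matrix.one_apply]
    have hRHS : ∀ (i j : Fin n),
        Matrix.vecMulVec (fun i => 2 - d i) (fun _ => (1 : ℝ)) i j
          = 2 - (G.degree i : ℝ) := by
      intro i j
      simp [Matrix.vecMulVec_apply, hd]
    rw [← Matrix.ext_iff]
    constructor
    · intro h i j
      have := h i j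
      rwa [hLHS, hRHS] at this
    · intro h i j
      rw [hLHS, hRHS]
      exact h i j
  constructor
  · intro h
    have hE := (entry D).mp h
    have key : ∀ x : Fin n → ℝ, (∀ a b, G.Adj a b → x a = x b) →
        ∀ j, 2 * x j = ∑ i, x i * (2 - (G.degree i : ℝ)) := by
      intro x hx j
      have h1 : ∑ i, x i * ((G.degree i : ℝ) * D i j - ∑ k ∈ G.neighborFinset i, D k j
          + (if i = j then (2:ℝ) else 0)) = ∑ i, x i * (2 - (G.degree i : ℝ)) :=
        Finset.sum_congr rfl fun i _ => by rw [hE i j]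
      have hswap : ∑ i, x i * ∑ k ∈ G.neighborFinset i, D k j
          = ∑ i, x i * ((G.degree i : ℝ) * D i j) := by
        calc ∑ i, x i * ∑ k ∈ G.neighborFinset i, D k j
            = ∑ i, ∑ k ∈ G.neighborFinset i, x i * D k j :=
              Finset.sum_congr rfl fun i _ => Finset.mul_sum _ _ _
          _ = ∑ k, ∑ i ∈ G.neighborFinset k, x i * D k j :=
              BilinearTreeAux.sum_neighbor_swap _
          _ = ∑ k, x k * ((G.degree k : ℝ) * D k j) := by
              refine Finset.sum_congr rfl fun k _ => ?_
              have hxs : ∑ i ∈ G.neighborFinset k, x i = (G.degree k : ℝ) * x k := by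
                have hcst : ∀ i ∈ G.neighborFinset k, x i = x k := fun i hi =>
                  (hx k i ((SimpleGraph.mem_neighborFinset _ _ _).mp hi)).symm
                rw [Finset.sum_congr rfl hcst, Finset.sum_const, nsmul_eq_mul,
                  G.card_neighborFinset_eq_degree]
              rw [← Finset.sum_mul, hxs]
              ring
      have hite : ∑ i, x i * (if i = j then (2:ℝ) else 0) = 2 * x j := by
        have hterm : ∀ i, x i * (if i = j then (2:ℝ) else 0)
            = if i = j then 2 * x i else 0 := by
          intro i; split_ifs <;> ring
        simp_rw [hterm]
        rw [Finset.sum_ite_eq' Finset.univ j (fun i => 2 * x i)]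
        simp
      have hexp : ∑ i, x i * ((G.degree i : ℝ) * D i j - ∑ k ∈ G.neighborFinset i, D k j
          + (if i = j then (2:ℝ) else 0))
        = ∑ i, x i * ((G.degree i : ℝ) * D i j)
          - ∑ i, x i * ∑ k ∈ G.neighborFinset i, D k j
          + ∑ i, x i * (if i = j then (2:ℝ) else 0) := by
        rw [← Finset.sum_sub_distrib, ← Finset.sum_add_distrib]
        exact Finset.sum_congr rfl fun i _ => by ring
      rw [hexp, hswap, hite] at h1
      linarith [h1]
    have hpre : G.Preconnected := by
      intro u v
      by_contra hr
      have hharm : ∀ a b, G.Adj a b →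
          (if G.Reachable u a then (1:ℝ) else 0)
            = (if G.Reachable u b then (1:ℝ) else 0) := by
        intro a b hab
        have hiff : G.Reachable u a ↔ G.Reachable u b :=
          ⟨fun h' => h'.trans hab.reachable, fun h' => h'.trans hab.symm.reachable⟩
        exact if_congr hiff rfl rfl
      have h2u := key _ hharm u
      have h2v := key _ hharm v
      rw [if_pos (SimpleGraph.Reachable.refl u)] at h2u
      rw [if_neg hr] at h2v
      linarith
    have hconn : G.Connected := by
      rw [SimpleGraph.connected_iff]
      exact ⟨hpre, ⟨⟨0, hn⟩⟩⟩
    have hcnt := key (fun _ => 1) (fun _ _ _ => rfl) ⟨0, hn⟩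
    have hdegsum : ∑ i : Fin n, (G.degree i : ℝ) = 2 * (G.edgeFinset.card : ℝ) := by
      rw [← Nat.cast_sum, G.sum_degrees_eq_twice_card_edges]
      push_cast
      ring
    have hsum2 : ∑ i : Fin n, (fun _ => (1:ℝ)) i * (2 - (G.degree i : ℝ))
        = 2 * (n : ℝ) - 2 * (G.edgeFinset.card : ℝ) := by
      simp only [one_mul]
      rw [Finset.sum_sub_distrib, Finset.sum_const, Finset.card_univ, Fintype.card_fin,
        hdegsum]
      ring
    rw [hsum2] at hcnt
    have hcard : G.edgeFinset.card + 1 = n := by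
      have h' : (G.edgeFinset.card : ℝ) + 1 = (n : ℝ) := by linarith
      exact_mod_cast h'
    have ht : G.IsTree := BilinearTreeAux.isTree_of_card hconn
      (by rw [Fintype.card_fin]; exact hcard)
    refine ⟨ht, fun i j => ?_⟩
    have hx0 : G.lapMatrix ℝ *ᵥ (fun a => D a j - (G.dist a j : ℝ)) = 0 := by
      ext a
      rw [SimpleGraph.lapMatrix_mulVec_apply]
      have h1 := hE a j
      have h2 := BilinearTreeAux.tree_entry ht a j
      have h3 : ∑ k ∈ G.neighborFinset a, (D k j - (G.dist k j : ℝ))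
          = ∑ k ∈ G.neighborFinset a, D k j
            - ∑ k ∈ G.neighborFinset a, (G.dist k j : ℝ) :=
        Finset.sum_sub_distrib _ _
      simp only [Pi.zero_apply]
      rw [h3, mul_sub]
      linarith
    have hker := (G.lapMatrix_mulVec_eq_zero_iff_forall_reachable
        (x := fun a => D a j - (G.dist a j : ℝ))).mp
        hx0 i j (hconn.preconnected i j)
    simp only [hDdiag j, SimpleGraph.dist_self, Nat.cast_zero, sub_zero] at hker
    linarith [hker]
  · rintro ⟨ht, hD⟩
    rw [entry D]
    intro i j
    simp only [hD]
    exact BilinearTreeAux.tree_entry ht i j
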